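/- For the barbell graph B_n (two copies of K_n with all edge weights 1, joined by a single edge of weight w > 0 between vertex n and vertex n+1), the vector [𝟙_{n-1}, α, -α, -𝟙_{n-1}] is a Laplacian eigenvector with eigenvalue 1 - α, where α = ( -(2w+n-2) + √((2w+n-2)² + 4(n-1)) )/2; moreover 1 - α ∈ (0,1) for all w > 0. -/
import Mathlib


open Matrix

/-- The weight matrix of the barbell graph `B_n`: two copies of `K_n` (all
edge weights `1`), joined by a single edge of weight `w` between the last
vertex `b` of the first clique (vertex `n`) and the vertex `b` of the second
clique (vertex `n+1`). -/
def barbellW (n : ℕ) (hn : 0 < n) (w : ℝ) :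
    Matrix (Fin n ⊕ Fin n) (Fin n ⊕ Fin n) ℝ :=
  fun u v =>
    match u, v with
    | .inl i, .inl j => if i = j then 0 else 1
    | .inr i, .inr j => if i = j then 0 else 1
    | .inl i, .inr j => if i = ⟨n - 1, by omega⟩ ∧ j = ⟨n - 1, by omega⟩ then w else 0
    | .inr i, .inl j => if i = ⟨n - 1, by omega⟩ ∧ j = ⟨n - 1, by omega⟩ then w else 0

/-- The Laplacian `L = D - A` of the barbell graph `B_n`. -/
def barbellLap (n : ℕ) (hn : 0 < n) (w : ℝ) :
    Matrix (Fin n ⊕ Fin n) (Fin n ⊕ Fin n) ℝ :=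
  Matrix.diagonal (fun u => ∑ v, barbellW n hn w u v) - barbellW n hn w

private lemma sum_if_eq (n : ℕ) (k : Fin n) (a c : ℝ) :
    ∑ j : Fin n, (if j = k then a else c) = a + ((n:ℝ)-1)*c := by
  have : ∀ j : Fin n, (if j = k then a else c) = (if j = k then a - c else 0) + c := by
    intro j; by_cases h : j = k <;> simp [h]
  simp only [this, Finset.sum_add_distrib, Finset.sum_ite_eq', Finset.mem_univ, if_true,
    Finset.sum_const, Finset.card_univ, Fintype.card_fin, nsmul_eq_mul]
  ring

private lemma sum_offdiag (n : ℕ) (i : Fin n) (f : Fin n → ℝ) :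
    ∑ j : Fin n, (if i = j then (0:ℝ) else 1) * f j = (∑ j, f j) - f i := by
  have : ∀ j : Fin n, (if i = j then (0:ℝ) else 1) * f j = f j - (if j = i then f i else 0) := by
    intro j
    rcases eq_or_ne i j with rfl|h
    · simp
    · simp [h, h.symm]
  simp [this, Finset.sum_sub_distrib]

private lemma sum_bridge (n : ℕ) (i k : Fin n) (w : ℝ) (f : Fin n → ℝ) :
    ∑ j : Fin n, (if i = k ∧ j = k then w else 0) * f j = if i = k then w * f k else 0 := by
  have : ∀ j : Fin n, (if i = k ∧ j = k then w else 0) * f j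
      = if j = k then (if i = k then w * f k else 0) else 0 := by
    intro j
    by_cases hj : j = k <;> by_cases hi : i = k <;> simp [hi, hj]
  simp [this]

private lemma lap_apply (n : ℕ) (hn : 0 < n) (w : ℝ) (x : Fin n ⊕ Fin n → ℝ)
    (u : Fin n ⊕ Fin n) :
    (barbellLap n hn w *ᵥ x) u
      = (∑ t, barbellW n hn w u t) * x u - ∑ t, barbellW n hn w u t * x t := by
  simp only [barbellLap, Matrix.sub_mulVec, Pi.sub_apply, Matrix.mulVec_diagonal]
  rfl

private lemma sum_bridge' (n : ℕ) (i k : Fin n) (w : ℝ) :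
    ∑ j : Fin n, (if i = k ∧ j = k then w else (0:ℝ)) = if i = k then w else 0 := by
  have := sum_bridge n i k w (fun _ => 1)
  simpa using this

/-- For the barbell graph `B_n` with connecting-edge weight `w > 0`, the
vector `[𝟙_{n-1}, α, -α, -𝟙_{n-1}]` (equal to `1` on the non-bridge vertices
of the first clique, `α` at its bridge vertex, `-α` at the bridge vertex of
the second clique, and `-1` on its remaining vertices) is a Laplacian
eigenvector with eigenvalue `1 - α`, where
`α = (-(2w+n-2) + √((2w+n-2)² + 4(n-1)))/2`; moreover `1 - α ∈ (0,1)`. -/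
theorem barbell_eigenvector (n : ℕ) (hn : 2 ≤ n) (w : ℝ) (hw : 0 < w) :
    let α : ℝ := (-(2 * w + n - 2) + Real.sqrt ((2 * w + n - 2) ^ 2 + 4 * (n - 1))) / 2
    let v : Fin n ⊕ Fin n → ℝ :=
      Sum.elim (fun i => if i = ⟨n - 1, by omega⟩ then α else 1)
        (fun i => if i = ⟨n - 1, by omega⟩ then -α else -1)
    barbellLap n (by omega) w *ᵥ v = (1 - α) • v ∧ 0 < 1 - α ∧ 1 - α < 1 := by
  intro α v
  have hn1 : (1:ℝ) ≤ (n:ℝ) := by exact_mod_cast Nat.one_le_of_lt hn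
  have hn2 : (2:ℝ) ≤ (n:ℝ) := by exact_mod_cast hn
  set b : ℝ := 2 * w + n - 2 with hb
  have hbpos : 0 < b := by simp [hb]; linarith
  have harg : (0:ℝ) ≤ b ^ 2 + 4 * ((n:ℝ) - 1) := by nlinarith
  have hs : Real.sqrt (b ^ 2 + 4 * ((n:ℝ) - 1)) ^ 2 = b ^ 2 + 4 * ((n:ℝ) - 1) :=
    Real.sq_sqrt harg
  have hsnn : 0 ≤ Real.sqrt (b ^ 2 + 4 * ((n:ℝ) - 1)) := Real.sqrt_nonneg _
  have hα : α = (-b + Real.sqrt (b ^ 2 + 4 * ((n:ℝ) - 1))) / 2 := rfl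
  have hq : α ^ 2 + b * α = (n:ℝ) - 1 := by
    rw [hα]; nlinarith [hs]
  have hαpos : 0 < α := by
    rw [hα]
    have : b < Real.sqrt (b ^ 2 + 4 * ((n:ℝ) - 1)) := by nlinarith [hs, hsnn]
    linarith
  have hαlt : α < 1 := by
    rw [hα]
    have : Real.sqrt (b ^ 2 + 4 * ((n:ℝ) - 1)) < b + 2 := by nlinarith [hs, hsnn]
    linarith
  refine ⟨?_, by linarith, by linarith⟩
  funext u
  cases u with
  | inl i =>
    rw [lap_apply]
    simp only [Pi.smul_apply, smul_eq_mul, Fintype.sum_sum_type,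
      barbellW, Sum.elim_inl, Sum.elim_inr, v]
    rw [sum_offdiag n i (fun j => if j = ⟨n-1, by omega⟩ then α else 1),
      sum_bridge n i _ w (fun j => if j = ⟨n-1, by omega⟩ then -α else -1),
      sum_if_eq, sum_bridge']
    have h1 : ∑ j : Fin n, (if i = j then (0:ℝ) else 1) = (n:ℝ) - 1 := by
      have := sum_offdiag n i (fun _ => 1); simpa using this
    rw [h1]
    by_cases hik : i = (⟨n-1, by omega⟩ : Fin n)
    · simp only [hik, if_true, if_pos rfl]
      linear_combination hq
    · simp only [hik, if_false]
      ring
  | inr i =>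
    rw [lap_apply]
    simp only [Pi.smul_apply, smul_eq_mul, Fintype.sum_sum_type,
      barbellW, Sum.elim_inl, Sum.elim_inr, v]
    rw [sum_offdiag n i (fun j => if j = ⟨n-1, by omega⟩ then -α else -1),
      sum_bridge n i _ w (fun j => if j = ⟨n-1, by omega⟩ then α else 1),
      sum_if_eq, sum_bridge']
    have h1 : ∑ j : Fin n, (if i = j then (0:ℝ) else 1) = (n:ℝ) - 1 := by
      have := sum_offdiag n i (fun _ => 1); simpa using this
    rw [h1]
    by_cases hik : i = (⟨n-1, by omega⟩ : Fin n)
    · simp only [hik, if_true, if_pos rfl]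
      linear_combination -hq
    · simp only [hik, if_false]
      ring
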